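/- arXiv:1312.2421 — 3 statements merged into one kernel-verified Lean document; each statement's English description precedes it below -/
import Mathlib

section
/- Let L be a 3×3 matrix of polynomials and K_{ij} the cofactor of L_{ji} (so that the adjugate matrix has entries K_{ij}). If at a point λ₀ a scalar w₀ satisfies L_{31}(λ₀)·w₀ + K_{31}(λ₀) = 0 and L_{32}(λ₀)·w₀ + K_{32}(λ₀) = 0 with (L_{31}(λ₀), L_{32}(λ₀)) ≠ (0,0), then B(λ₀) = 0, where B(λ) = [L_{11}(λ) − L_{22}(λ)]·L_{31}(λ)·L_{32}(λ) − L_{12}(λ)·L_{31}(λ)² + L_{21}(λ)·L_{32}(λ)². -/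
theorem separation_poly_vanishes (L : Matrix (Fin 3) (Fin 3) (Polynomial ℂ))
    (K : Matrix (Fin 3) (Fin 3) (Polynomial ℂ)) (hK : K = L.adjugate)
    (lam0 w0 : ℂ)
    (h1 : (L 2 0).eval lam0 * w0 + (K 2 0).eval lam0 = 0)
    (h2 : (L 2 1).eval lam0 * w0 + (K 2 1).eval lam0 = 0)
    (hnz : ¬((L 2 0).eval lam0 = 0 ∧ (L 2 1).eval lam0 = 0)) :
    (((L 0 0) - (L 1 1)) * (L 2 0) * (L 2 1)
      - (L 0 1) * (L 2 0) ^ 2 + (L 1 0) * (L 2 1) ^ 2).eval lam0 = 0 := by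
  subst hK
  rw [Matrix.adjugate_fin_three] at h1 h2
  simp [Matrix.cons_val_zero, Matrix.cons_val_one] at h1 h2
  simp only [Polynomial.eval_add, Polynomial.eval_sub, Polynomial.eval_mul,
    Polynomial.eval_pow]
  linear_combination (L 2 1).eval lam0 * h1 - (L 2 0).eval lam0 * h2
end

section
/- If B(λ₀) = 0 for a 3×3 traceless matrix L(λ₀) with L_{31}(λ₀) ≠ 0 and L_{32}(λ₀) ≠ 0, then w₀ = L_{11}(λ₀) − L_{12}(λ₀)·L_{31}(λ₀)/L_{32}(λ₀) satisfies the spectral curve equation det(L(λ₀) − w₀·I) = 0, i.e., w₀ is an eigenvalue of L(λ₀). -/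
theorem sep_variable_on_spectral_curve (L : Matrix (Fin 3) (Fin 3) ℂ)
    (htr : L.trace = 0)
    (h31 : L 2 0 ≠ 0) (h32 : L 2 1 ≠ 0)
    (hB : (L 0 0 - L 1 1) * L 2 0 * L 2 1 - L 0 1 * (L 2 0) ^ 2 + L 1 0 * (L 2 1) ^ 2 = 0)
    (w0 : ℂ) (hw0 : w0 = L 0 0 - L 0 1 * L 2 0 / L 2 1) :
    (L - w0 • (1 : Matrix (Fin 3) (Fin 3) ℂ)).det = 0 := by
  rw [← Matrix.exists_mulVec_eq_zero_iff]
  refine ⟨![L 2 1, -(L 2 0), 0], ?_, ?_⟩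
  · intro h
    apply h32
    have := congrFun h 0
    simpa using this
  · funext i
    fin_cases i
    · simp only [Matrix.mulVec, dotProduct, Fin.sum_univ_three, Matrix.sub_apply,
        Matrix.smul_apply, Matrix.one_apply, hw0, Fin.ext_iff, Matrix.cons_val]
      norm_num
      field_simp
      ring
    · simp only [Matrix.mulVec, dotProduct, Fin.sum_univ_three, Matrix.sub_apply,
        Matrix.smul_apply, Matrix.one_apply, hw0, Fin.ext_iff, Matrix.cons_val]
      norm_num
      field_simp
      linear_combination hB
    · simp only [Matrix.mulVec, dotProduct, Fin.sum_univ_three, Matrix.sub_apply,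
        Matrix.smul_apply, Matrix.one_apply, hw0, Fin.ext_iff, Matrix.cons_val]
      norm_num
      exact sub_eq_zero_of_eq (mul_comm (L 2 0) (L 2 1))
end

section
/- With the Poisson structure {L_{ij}^{(m)}, L_{kl}^{(n)}} = L_{kj}^{(m+n+1−N)}·δ_{il} − L_{il}^{(m+n+1−N)}·δ_{kj} (terms with index outside 0,…,N−1 set to zero) on polynomials in the variables L_{ij}^{(m)}, the coefficients of (1/2)Tr L(λ)² Poisson-commute with the coefficients of (1/2)Tr L(μ)², where L(λ) = Σ_{m=0}^{N−1} L^{(m)} λ^m + Λ λ^N for any fixed constant matrix Λ. In particular for N = 1 and 3×3 matrices: if L(λ) = L⁰ + Λλ, then {Tr L(λ)², Tr L(μ)²} = 0 for all λ, μ, where the bracket on entries is {L⁰_{ij}, L⁰_{kl}} = L⁰_{kj} δ_{il} − L⁰_{il} δ_{kj}. -/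
open MvPolynomial

/-- The Lie–Poisson bracket `{f,g} = Σ ({L_ij,L_kl}) ∂f/∂L_ij ∂g/∂L_kl` with
`{L_ij,L_kl} = L_kj δ_il − L_il δ_kj`, on polynomial functions of the entries of `L⁰`. -/
noncomputable def liePB (f g : MvPolynomial (Fin 3 × Fin 3) ℂ) :
    MvPolynomial (Fin 3 × Fin 3) ℂ :=
  ∑ i : Fin 3, ∑ j : Fin 3, ∑ k : Fin 3, ∑ l : Fin 3,
    ((if i = l then X (k, j) else 0) - (if k = j then X (i, l) else 0)) *
      pderiv (i, j) f * pderiv (k, l) g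

/-- The `(i,j)` entry of `L(λ) = L⁰ + Λ λ` as a polynomial function of the entries of `L⁰`. -/
noncomputable def Lent (Λ : Matrix (Fin 3) (Fin 3) ℂ) (lam : ℂ) (i j : Fin 3) :
    MvPolynomial (Fin 3 × Fin 3) ℂ :=
  X (i, j) + C (Λ i j * lam)

/-- `Tr L(λ)²` as a polynomial function of the entries of `L⁰`. -/
noncomputable def trLsq (Λ : Matrix (Fin 3) (Fin 3) ℂ) (lam : ℂ) :
    MvPolynomial (Fin 3 × Fin 3) ℂ :=
  ∑ i : Fin 3, ∑ j : Fin 3, Lent Λ lam i j * Lent Λ lam j i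


lemma pderiv_trLsq (Λ : Matrix (Fin 3) (Fin 3) ℂ) (lam : ℂ) (i j : Fin 3) :
    pderiv (i, j) (trLsq Λ lam) = 2 * Lent Λ lam j i := by
  simp only [trLsq, Lent, map_sum, pderiv_mul, map_add, pderiv_C, pderiv_X, add_zero]
  simp [Finset.sum_add_distrib, Pi.single_apply, Prod.ext_iff, Finset.sum_ite_eq',
    Finset.sum_ite_eq, mul_comm, two_mul]
  rw [Finset.sum_comm]
  simp [← ite_and, and_comm, Finset.sum_ite_eq (Finset.univ : Finset (Fin 3))]
  simp [ite_and, Finset.sum_ite_eq', Finset.sum_ite_eq]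

theorem trLsq_involution (Λ : Matrix (Fin 3) (Fin 3) ℂ) (lam mu : ℂ) :
    liePB (trLsq Λ lam) (trLsq Λ mu) = 0 := by
  simp only [liePB, pderiv_trLsq, Lent]
  simp only [Fin.sum_univ_succ, Fin.sum_univ_zero]
  norm_num [Fin.ext_iff]
  ring
end
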